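/- Harmonic truncation by induction: define p(n) = n+1 if n is even and p(n) = n if n is odd. Suppose a family (u_{n,p}) satisfies: u_{n,p} = 0 for |p| > p(n) when n ∈ {0,1,2}, and for each k, u_{k+2,p} is determined by L_p u_{k+2,p} = f_{k,p} whenever |p| ≥ p(k+2)+1 (with the other terms vanishing), where f_{k,p} = λΣ_{n₁+n₂+n₃=k}Σ_{p₁+p₂+p₃=p} u_{n₁,p₁}u_{n₂,p₂}u_{n₃,p₃} and L_p is invertible for |p| ≥ 2. Then u_{n,p} = 0 for all n and all |p| ≥ p(n)+1. In particular the combinatorial lemma holds: if |pᵢ| ≤ p(nᵢ) for i=1,2,3 and n₁+n₂+n₃ = k with at least one nᵢ odd (resp. all parities matching k), then |p₁+p₂+p₃| ≤ k+2 when k+2 is odd. -/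
import Mathlib


open Finset

/-- `p(n) = n+1` if `n` is even, `p(n) = n` if `n` is odd. -/
def pbound (n : ℕ) : ℕ := if Even n then n + 1 else n

lemma pb3 (c1 c2 c3 k : ℕ) (h : c1 + c2 + c3 = k) :
    pbound c1 + pbound c2 + pbound c3 ≤ pbound (k + 2) := by
  simp only [pbound, Nat.even_iff]
  split_ifs <;> omega

lemma pb_ge (n : ℕ) : n ≤ pbound n := by
  simp only [pbound]; split_ifs <;> omega

/-- Harmonic truncation by induction.  Suppose the amplitudes `u_{n,·}` (finitely
supported families of complex numbers) satisfy `u_{n,p} = 0` for `|p| > p(n)` when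
`n ∈ {0,1,2}`, and for each `k` and each `|p| ≥ p(k+2)+1` the amplitude
`u_{k+2,p}` is determined by `L_p u_{k+2,p} = f_{k,p}` (the other terms in the
`O(ε^k)` equation vanishing), where
`f_{k,p} = λ Σ_{n₁+n₂+n₃=k} Σ_{p₁+p₂+p₃=p} u_{n₁,p₁}u_{n₂,p₂}u_{n₃,p₃}`
and `L_p` is invertible (nonvanishing) for `|p| ≥ 2`.  Then `u_{n,p} = 0` for
all `n` and all `|p| ≥ p(n)+1`.  In particular the combinatorial lemma holds:
for `n₁+n₂+n₃ = k` odd with `n₁` odd, bounds `|p₁| ≤ n₁`, `|p₂| ≤ n₂+1`,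
`|p₃| ≤ n₃+1` give `|p₁+p₂+p₃| ≤ k+2`. -/
theorem stmt9 (lam : ℂ) (L : ℤ → ℂ) (hL : ∀ p : ℤ, 2 ≤ |p| → L p ≠ 0)
    (u : ℕ → (ℤ →₀ ℂ))
    (f : ℕ → ℤ → ℂ)
    (hf : ∀ k : ℕ, ∀ p : ℤ, f k p =
      lam * ∑ c ∈ ((Finset.range (k+1)) ×ˢ (Finset.range (k+1))).filter
          (fun c => c.1 + c.2 ≤ k),
        ∑ p1 ∈ (u c.1).support, ∑ p2 ∈ (u c.2).support,
          u c.1 p1 * u c.2 p2 * u (k - c.1 - c.2) (p - p1 - p2))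
    (hbase : ∀ n ≤ 2, ∀ p : ℤ, (pbound n : ℤ) < |p| → u n p = 0)
    (hind : ∀ k : ℕ, ∀ p : ℤ, (pbound (k+2) : ℤ) + 1 ≤ |p| →
      L p * u (k+2) p = f k p) :
    (∀ n : ℕ, ∀ p : ℤ, (pbound n : ℤ) + 1 ≤ |p| → u n p = 0) ∧
    (∀ k n1 n2 n3 : ℕ, Odd k → n1 + n2 + n3 = k → Odd n1 →
      ∀ p1 p2 p3 : ℤ, |p1| ≤ (n1 : ℤ) → |p2| ≤ (n2 : ℤ) + 1 → |p3| ≤ (n3 : ℤ) + 1 →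
        |p1 + p2 + p3| ≤ (k : ℤ) + 2) := by
  have main : ∀ n : ℕ, ∀ p : ℤ, (pbound n : ℤ) + 1 ≤ |p| → u n p = 0 := by
    intro n
    induction n using Nat.strong_induction_on with
    | _ n ih =>
      intro p hp
      by_cases hn : n ≤ 2
      · exact hbase n hn p (by linarith)
      · obtain ⟨k, rfl⟩ : ∃ k, n = k + 2 := ⟨n - 2, by omega⟩
        have hpb : ((k : ℤ) + 2) ≤ (pbound (k+2) : ℤ) := by
          exact_mod_cast Nat.cast_le.mpr (pb_ge (k+2))
        have hLp : L p ≠ 0 := hL p (by linarith)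
        have heq := hind k p hp
        have hf0 : f k p = 0 := by
          rw [hf]
          rw [mul_eq_zero]; right
          apply Finset.sum_eq_zero; intro c hc
          apply Finset.sum_eq_zero; intro p1 hp1
          apply Finset.sum_eq_zero; intro p2 hp2
          simp only [Finset.mem_filter, Finset.mem_product, Finset.mem_range] at hc
          have h1 : |p1| ≤ (pbound c.1 : ℤ) := by
            by_contra h; push_neg at h
            exact (Finsupp.mem_support_iff.mp hp1) (ih c.1 (by omega) p1 (by omega))
          have h2 : |p2| ≤ (pbound c.2 : ℤ) := by
            by_contra h; push_neg at h
            exact (Finsupp.mem_support_iff.mp hp2) (ih c.2 (by omega) p2 (by omega))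
          have hsum := pb3 c.1 c.2 (k - c.1 - c.2) k (by omega)
          have hsum' : (pbound c.1 : ℤ) + pbound c.2 + pbound (k - c.1 - c.2)
              ≤ (pbound (k+2) : ℤ) := by exact_mod_cast hsum
          have habs : |p| - |p1 + p2| ≤ |p - (p1 + p2)| := abs_sub_abs_le_abs_sub p (p1 + p2)
          have habs2 : |p1 + p2| ≤ |p1| + |p2| := abs_add_le _ _
          have h3 : u (k - c.1 - c.2) (p - p1 - p2) = 0 := by
            apply ih (k - c.1 - c.2) (by omega)
            have : p - p1 - p2 = p - (p1 + p2) := by ring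
            rw [this]
            linarith
          simp [h3]
        have := heq.trans hf0
        exact (mul_eq_zero.mp this).resolve_left hLp
  refine ⟨main, fun k n1 n2 n3 _ hsum _ p1 p2 p3 h1 h2 h3 => ?_⟩
  have := abs_add_le (p1 + p2) p3
  have := abs_add_le p1 p2
  have : (n1 : ℤ) + n2 + n3 = k := by exact_mod_cast hsum
  linarith [abs_add_le (p1 + p2) p3, abs_add_le p1 p2]
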